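/- Let I be a countable set (|I| ≤ ℵ₀), let τ : ℝ^I → ℝ and let p ∈ [1, ∞). Then τ preserves p-integrability over every finite measure space if, and only if, τ preserves p-integrability over ([0,1], B_[0,1], Leb), where B_[0,1] is the Borel σ-algebra on [0,1] and Leb is the Lebesgue measure on [0,1]. -/

import Mathlib

open MeasureTheory Set Filter Topology ProbabilityTheory
open scoped ENNReal


open MeasureTheory

universe u v

/-- `f ∈ L^p(μ)`: `f` is measurable and `∫ |f|^p dμ < ∞`. -/
def MemLpReal {Ω : Type u} [MeasurableSpace Ω] (μ : Measure Ω) (p : ℝ) (f : Ω → ℝ) : Prop :=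
  Measurable f ∧ ∫⁻ x, ENNReal.ofReal (|f x| ^ p) ∂μ < ⊤

/-- `τ` preserves `p`-integrability over the measure space `(Ω, μ)`. -/
def PreservesLpOver {I : Type v} (τ : (I → ℝ) → ℝ) (p : ℝ)
    (Ω : Type u) [MeasurableSpace Ω] (μ : Measure Ω) : Prop :=
  ∀ f : I → Ω → ℝ, (∀ i, MemLpReal μ p (f i)) →
    MemLpReal μ p fun x => τ fun i => f i x

namespace PPI


noncomputable def cb (b : Bool) : ℝ := if b then 1 else 0

lemma cb_nonneg (b : Bool) : 0 ≤ cb b := by cases b <;> simp [cb]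
lemma cb_le_one (b : Bool) : cb b ≤ 1 := by cases b <;> simp [cb]

lemma summable_geom : Summable (fun n : ℕ => (4:ℝ)⁻¹ ^ (n+1)) := by
  have h : Summable (fun n : ℕ => (4:ℝ)⁻¹ ^ n) :=
    summable_geometric_of_lt_one (by norm_num) (by norm_num)
  simpa [pow_succ, mul_comm] using h.mul_left (4:ℝ)⁻¹

lemma summable_cb (a : ℕ → Bool) : Summable (fun n => cb (a n) * (4:ℝ)⁻¹ ^ (n+1)) := by
  refine Summable.of_nonneg_of_le (fun n => ?_) (fun n => ?_) summable_geom
  · exact mul_nonneg (cb_nonneg _) (by positivity)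
  · exact mul_le_of_le_one_left (by positivity) (cb_le_one _)

noncomputable def gmap (a : ℕ → Bool) : ℝ := ∑' n, cb (a n) * (4:ℝ)⁻¹ ^ (n+1)

lemma tsum_tail (m : ℕ) : ∑' k : ℕ, (4:ℝ)⁻¹ ^ (k + m + 1) = (4:ℝ)⁻¹ ^ (m + 1) * (4/3) := by
  have h : ∀ k : ℕ, (4:ℝ)⁻¹ ^ (k + m + 1) = (4:ℝ)⁻¹ ^ (m+1) * (4:ℝ)⁻¹ ^ k := by
    intro k; rw [show k + m + 1 = (m+1) + k by omega, pow_add]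
  rw [tsum_congr h, tsum_mul_left, tsum_geometric_of_lt_one (by norm_num) (by norm_num)]
  norm_num

lemma gmap_tail_le (a : ℕ → Bool) (m : ℕ) :
    ∑' k : ℕ, cb (a (k + m)) * (4:ℝ)⁻¹ ^ (k + m + 1) ≤ (4:ℝ)⁻¹ ^ (m + 1) * (4/3) := by
  rw [← tsum_tail m]
  refine Summable.tsum_le_tsum (fun k => ?_) ?_ ?_
  · exact mul_le_of_le_one_left (by positivity) (cb_le_one _)
  · exact (summable_nat_add_iff (f := fun n => cb (a n) * (4:ℝ)⁻¹ ^ (n+1)) m).mpr (summable_cb a)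
  · exact (summable_nat_add_iff (f := fun n => (4:ℝ)⁻¹ ^ (n+1)) m).mpr summable_geom

lemma gmap_tail_nonneg (a : ℕ → Bool) (m : ℕ) :
    0 ≤ ∑' k : ℕ, cb (a (k + m)) * (4:ℝ)⁻¹ ^ (k + m + 1) :=
  tsum_nonneg (fun k => mul_nonneg (cb_nonneg _) (by positivity))

lemma gmap_split (a : ℕ → Bool) (m : ℕ) :
    gmap a = (∑ k ∈ Finset.range m, cb (a k) * (4:ℝ)⁻¹ ^ (k+1))
      + ∑' k : ℕ, cb (a (k + m)) * (4:ℝ)⁻¹ ^ (k + m + 1) := by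
  rw [gmap, ← (summable_cb a).sum_add_tsum_nat_add m]

lemma gmap_nonneg (a : ℕ → Bool) : 0 ≤ gmap a :=
  tsum_nonneg (fun k => mul_nonneg (cb_nonneg _) (by positivity))

lemma gmap_le (a : ℕ → Bool) : gmap a ≤ 1 := by
  have h := gmap_tail_le a 0
  have h2 := gmap_split a 0
  simp only [Finset.range_zero, Finset.sum_empty, zero_add] at h2
  rw [h2]
  calc ∑' k : ℕ, cb (a (k + 0)) * (4:ℝ)⁻¹ ^ (k + 0 + 1) ≤ (4:ℝ)⁻¹ ^ (0+1) * (4/3) := h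
  _ ≤ 1 := by norm_num

lemma gmap_mem_Icc (a : ℕ → Bool) : gmap a ∈ Set.Icc (0:ℝ) 1 :=
  ⟨gmap_nonneg a, gmap_le a⟩

lemma continuous_gmap : Continuous gmap := by
  refine continuous_tsum (f := fun n (a : ℕ → Bool) => cb (a n) * (4:ℝ)⁻¹ ^ (n+1))
      (u := fun n => (4:ℝ)⁻¹ ^ (n+1)) (fun n => ?_) summable_geom (fun n a => ?_)
  · exact ((continuous_of_discreteTopology (f := cb)).comp (continuous_apply n)).mul
      continuous_const
  · rw [Real.norm_eq_abs, abs_mul, abs_of_nonneg (cb_nonneg _), abs_of_nonneg (by positivity)]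
    exact mul_le_of_le_one_left (by positivity) (cb_le_one _)

lemma injective_gmap : Function.Injective gmap := by
  intro a b hab
  by_contra hne
  have hex : ∃ n, a n ≠ b n := by
    by_contra h; push_neg at h; exact hne (funext h)
  classical
  let n := Nat.find hex
  have hn : a n ≠ b n := Nat.find_spec hex
  have hlt : ∀ k < n, a k = b k := fun k hk => by
    by_contra h; exact (Nat.find_min hex hk) h
  -- wlog: a n = true, b n = false
  have key : ∀ x y : ℕ → Bool, (∀ k < n, x k = y k) → x n = true → y n = false →
      gmap y < gmap x := by
    intro x y hxy hx hy
    have hsplitx := gmap_split x (n+1)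
    have hsplity := gmap_split y (n+1)
    have hsum : (∑ k ∈ Finset.range (n+1), cb (x k) * (4:ℝ)⁻¹ ^ (k+1))
        = (∑ k ∈ Finset.range (n+1), cb (y k) * (4:ℝ)⁻¹ ^ (k+1)) + (4:ℝ)⁻¹ ^ (n+1) := by
      rw [Finset.sum_range_succ, Finset.sum_range_succ]
      have : ∀ k ∈ Finset.range n, cb (x k) * (4:ℝ)⁻¹ ^ (k+1) = cb (y k) * (4:ℝ)⁻¹ ^ (k+1) := by
        intro k hk; rw [hxy k (Finset.mem_range.mp hk)]
      rw [Finset.sum_congr rfl this, hx, hy]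
      simp [cb]
    rw [hsplitx, hsplity, hsum]
    have h1 : ∑' k : ℕ, cb (y (k + (n+1))) * (4:ℝ)⁻¹ ^ (k + (n+1) + 1)
        ≤ (4:ℝ)⁻¹ ^ (n + 2) * (4/3) := by simpa using gmap_tail_le y (n+1)
    have h2 : 0 ≤ ∑' k : ℕ, cb (x (k + (n+1))) * (4:ℝ)⁻¹ ^ (k + (n+1) + 1) :=
      gmap_tail_nonneg x (n+1)
    have h3 : (4:ℝ)⁻¹ ^ (n + 2) * (4/3) < (4:ℝ)⁻¹ ^ (n+1) := by
      rw [pow_succ]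
      have hpos : (0:ℝ) < (4:ℝ)⁻¹ ^ (n+1) := by positivity
      nlinarith
    linarith
  rcases Bool.eq_false_or_eq_true (a n) with ha | ha
  · have hb : b n = false := by
      cases hbn : b n
      · rfl
      · exact absurd (ha.trans hbn.symm) hn
    exact absurd hab (ne_of_gt (key a b hlt ha hb))
  · have hb : b n = true := by
      cases hbn : b n
      · exact absurd (ha.trans hbn.symm) hn
      · rfl
    exact absurd hab (ne_of_lt (key b a (fun k hk => (hlt k hk).symm) hb ha))

noncomputable def pfx (n : ℕ) (v : Fin n → Bool) : ℝ :=
  ∑ k : Fin n, cb (v k) * (4:ℝ)⁻¹ ^ ((k:ℕ)+1)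

lemma range_gmap_subset (n : ℕ) :
    Set.range gmap ⊆ ⋃ v : Fin n → Bool, Set.Icc (pfx n v) (pfx n v + (4:ℝ)⁻¹ ^ n / 3) := by
  rintro _ ⟨a, rfl⟩
  refine Set.mem_iUnion.mpr ⟨fun k => a k, ?_⟩
  have hpfx : pfx n (fun k => a k) = ∑ k ∈ Finset.range n, cb (a k) * (4:ℝ)⁻¹ ^ (k+1) := by
    unfold pfx; exact (Finset.sum_range (fun k => cb (a k) * (4:ℝ)⁻¹ ^ (k+1))).symm
  have hsplit := gmap_split a n
  have h1 := gmap_tail_nonneg a n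
  have h2 := gmap_tail_le a n
  have h3 : (4:ℝ)⁻¹ ^ (n+1) * (4/3) = (4:ℝ)⁻¹ ^ n / 3 := by
    rw [pow_succ]; ring
  constructor
  · rw [hpfx, hsplit]; linarith
  · rw [hpfx, hsplit]; linarith

lemma volume_range_gmap : volume (Set.range gmap) = 0 := by
  have hb : ∀ n : ℕ, volume (Set.range gmap) ≤ ENNReal.ofReal ((1/2:ℝ)^n / 3) := by
    intro n
    calc volume (Set.range gmap)
        ≤ volume (⋃ v : Fin n → Bool, Set.Icc (pfx n v) (pfx n v + (4:ℝ)⁻¹ ^ n / 3)) :=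
          measure_mono (range_gmap_subset n)
      _ ≤ ∑ v : Fin n → Bool, volume (Set.Icc (pfx n v) (pfx n v + (4:ℝ)⁻¹ ^ n / 3)) :=
          measure_iUnion_fintype_le _ _
      _ = ∑ _v : Fin n → Bool, ENNReal.ofReal ((4:ℝ)⁻¹ ^ n / 3) := by
          refine Finset.sum_congr rfl (fun v _ => ?_)
          rw [Real.volume_Icc, add_sub_cancel_left]
      _ = (Fintype.card (Fin n → Bool)) * ENNReal.ofReal ((4:ℝ)⁻¹ ^ n / 3) := by
          rw [Finset.sum_const, nsmul_eq_mul, Finset.card_univ]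
      _ = ENNReal.ofReal ((1/2:ℝ)^n / 3) := by
          have hcard : Fintype.card (Fin n → Bool) = 2 ^ n := by simp
          rw [hcard, Nat.cast_pow]
          have h2 : ((2:ℕ) : ℝ≥0∞) = ENNReal.ofReal (2:ℝ) := by norm_num
          rw [h2, ← ENNReal.ofReal_pow (by norm_num), ← ENNReal.ofReal_mul (by positivity)]
          congr 1
          rw [← mul_div_assoc, ← mul_pow]
          norm_num
  have ht : Filter.Tendsto (fun n : ℕ => ENNReal.ofReal ((1/2:ℝ)^n / 3)) Filter.atTop (nhds 0) := by
    have h1 : Filter.Tendsto (fun n : ℕ => ((1/2:ℝ)^n / 3)) Filter.atTop (nhds 0) := by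
      have := tendsto_pow_atTop_nhds_zero_of_lt_one (r := (1/2:ℝ)) (by norm_num) (by norm_num)
      simpa using this.div_const 3
    have := (ENNReal.continuous_ofReal.tendsto 0).comp h1
    simpa [Function.comp_def] using this
  have : volume (Set.range gmap) ≤ 0 := ge_of_tendsto' ht hb
  exact le_antisymm this zero_le



noncomputable def quant (ν : Measure ℝ) (u : ℝ) : ℝ :=
  if 0 < u ∧ u < 1 then sInf {x | u ≤ cdf ν x} else 0

variable {ν : Measure ℝ} [IsProbabilityMeasure ν]

lemma quant_nonempty {u : ℝ} (h1 : u < 1) : {x : ℝ | u ≤ cdf ν x}.Nonempty := by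
  have h := (tendsto_cdf_atTop ν).eventually (eventually_gt_nhds h1)
  rcases h.exists with ⟨x, hx⟩
  exact ⟨x, le_of_lt hx⟩

lemma quant_bddBelow {u : ℝ} (h0 : 0 < u) : BddBelow {x : ℝ | u ≤ cdf ν x} := by
  have h := (tendsto_cdf_atBot ν).eventually (eventually_lt_nhds h0)
  rcases h.exists with ⟨x₀, hx₀⟩
  refine ⟨x₀, fun z hz => ?_⟩
  by_contra hlt
  push_neg at hlt
  exact absurd (le_trans hz (monotone_cdf ν hlt.le)) (not_le.mpr hx₀)

lemma quant_le_iff {u x : ℝ} (h0 : 0 < u) (h1 : u < 1) :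
    quant ν u ≤ x ↔ u ≤ cdf ν x := by
  rw [quant, if_pos ⟨h0, h1⟩]
  constructor
  · intro hx
    have hy : ∀ y, x < y → u ≤ cdf ν y := by
      intro y hy
      obtain ⟨z, hz, hzy⟩ := exists_lt_of_csInf_lt (quant_nonempty h1) (lt_of_le_of_lt hx hy)
      exact le_trans hz (monotone_cdf ν hzy.le)
    have ht : Filter.Tendsto (cdf ν) (nhdsWithin x (Set.Ioi x)) (nhds (cdf ν x)) :=
      ((cdf ν).right_continuous x).mono Set.Ioi_subset_Ici_self
    exact ge_of_tendsto ht (eventually_nhdsWithin_of_forall (fun y hy' => hy y hy'))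
  · intro hx
    exact csInf_le (quant_bddBelow h0) hx

lemma measurable_quant (ν : Measure ℝ) [IsProbabilityMeasure ν] : Measurable (quant ν) := by
  apply measurable_of_Iic
  intro x
  have hset : quant ν ⁻¹' Set.Iic x =
      (Set.Ioo 0 1 ∩ Set.Iic (cdf ν x)) ∪ ((Set.Ioo (0:ℝ) 1)ᶜ ∩ {u : ℝ | (0:ℝ) ≤ x}) := by
    ext u
    simp only [Set.mem_preimage, Set.mem_Iic, Set.mem_union, Set.mem_inter_iff, Set.mem_Ioo,
      Set.mem_compl_iff, Set.mem_setOf_eq]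
    by_cases hu : 0 < u ∧ u < 1
    · rw [show (quant ν u ≤ x) = (u ≤ cdf ν x) from propext (quant_le_iff hu.1 hu.2)]
      constructor
      · intro h; exact Or.inl ⟨hu, h⟩
      · rintro (⟨-, h⟩ | ⟨h, -⟩)
        · exact h
        · exact absurd hu h
    · rw [quant, if_neg hu]
      constructor
      · intro h; exact Or.inr ⟨hu, h⟩
      · rintro (⟨h, -⟩ | ⟨-, h⟩)
        · exact absurd h hu
        · exact h
  rw [hset]
  exact (measurableSet_Ioo.inter measurableSet_Iic).union
    (measurableSet_Ioo.compl.inter (MeasurableSet.const _))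

lemma isProb_leb : IsProbabilityMeasure (volume.restrict (Set.Ioo (0:ℝ) 1)) := by
  constructor
  rw [Measure.restrict_apply_univ, Real.volume_Ioo]
  norm_num

lemma map_quant (ν : Measure ℝ) [IsProbabilityMeasure ν] :
    Measure.map (quant ν) (volume.restrict (Set.Ioo (0:ℝ) 1)) = ν := by
  haveI := isProb_leb
  haveI : IsProbabilityMeasure (Measure.map (quant ν) (volume.restrict (Set.Ioo (0:ℝ) 1))) :=
    Measure.isProbabilityMeasure_map (measurable_quant ν).aemeasurable
  refine MeasureTheory.Measure.ext_of_Iic _ _ (fun x => ?_)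
  rw [Measure.map_apply (measurable_quant ν) measurableSet_Iic,
      Measure.restrict_apply ((measurable_quant ν) measurableSet_Iic)]
  have hset : quant ν ⁻¹' Set.Iic x ∩ Set.Ioo 0 1 = Set.Ioo 0 1 ∩ Set.Iic (cdf ν x) := by
    ext u
    simp only [Set.mem_inter_iff, Set.mem_preimage, Set.mem_Iic, Set.mem_Ioo]
    constructor
    · rintro ⟨h, hu⟩; exact ⟨hu, (quant_le_iff hu.1 hu.2).mp h⟩
    · rintro ⟨hu, h⟩; exact ⟨(quant_le_iff hu.1 hu.2).mpr h, hu⟩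
  rw [hset]
  have h0 := cdf_nonneg ν x
  have h1 := cdf_le_one ν x
  rcases lt_or_eq_of_le h1 with h1' | h1'
  · have heq : Set.Ioo (0:ℝ) 1 ∩ Set.Iic (cdf ν x) = Set.Ioc 0 (cdf ν x) := by
      ext u
      simp only [Set.mem_inter_iff, Set.mem_Ioo, Set.mem_Iic, Set.mem_Ioc]
      constructor
      · rintro ⟨⟨a, b⟩, c⟩; exact ⟨a, c⟩
      · rintro ⟨a, c⟩; exact ⟨⟨a, lt_of_le_of_lt c h1'⟩, c⟩
    rw [heq, Real.volume_Ioc, sub_zero, ofReal_cdf]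
  · have heq : Set.Ioo (0:ℝ) 1 ∩ Set.Iic (cdf ν x) = Set.Ioo 0 1 := by
      rw [Set.inter_eq_left]
      intro u hu
      rw [Set.mem_Iic, h1']
      exact hu.2.le
    rw [heq, Real.volume_Ioo, sub_zero, show (1:ℝ) = cdf ν x from h1'.symm, ofReal_cdf]

/-- Pushforward existence on standard Borel spaces. -/
lemma exists_map_eq (Ω' : Type*) [MeasurableSpace Ω'] [StandardBorelSpace Ω'] [Nonempty Ω']
    (ν : Measure Ω') [IsProbabilityMeasure ν] :
    ∃ G : ℝ → Ω', Measurable G ∧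
      Measure.map G (volume.restrict (Set.Ioo (0:ℝ) 1)) = ν := by
  haveI := isProb_leb
  set e := MeasureTheory.embeddingReal Ω' with he_def
  have he : MeasurableEmbedding e := MeasureTheory.measurableEmbedding_embeddingReal Ω'
  set νR := Measure.map e ν with hνR
  haveI : IsProbabilityMeasure νR := Measure.isProbabilityMeasure_map he.measurable.aemeasurable
  set r : ℝ → Ω' := Function.extend e id (fun _ => Classical.arbitrary Ω') with hr
  have hrmeas : Measurable r := he.measurable_extend measurable_id measurable_const
  have hre : ∀ ω, r (e ω) = ω := fun ω => he.injective.extend_apply _ _ _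
  refine ⟨r ∘ quant νR, hrmeas.comp (measurable_quant νR), ?_⟩
  rw [← Measure.map_map hrmeas (measurable_quant νR), map_quant νR, hνR,
      Measure.map_map hrmeas he.measurable]
  have : r ∘ e = id := funext hre
  rw [this, Measure.map_id]

end PPI

namespace PPI

open Function

/-- Measurability of an integrability-preserving `τ`. -/
lemma measurable_tau {I : Type v} [Countable I] (τ : (I → ℝ) → ℝ) (p : ℝ) (hp : 1 ≤ p)
    (h : PreservesLpOver τ p (Set.Icc (0 : ℝ) 1) volume) : Measurable τ := by
  have hp0 : p ≠ 0 := by intro h0; rw [h0] at hp; norm_num at hp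
  by_cases hI : Nonempty I
  case neg =>
    haveI : IsEmpty I := not_nonempty_iff.mp hI
    exact Subsingleton.measurable
  case pos =>
  have hunc : ¬Countable (I → ℝ) := by
    intro hc
    have hinj : Function.Injective (Function.const I : ℝ → I → ℝ) := Function.const_injective
    haveI : Countable ℝ := hinj.countable
    exact (not_countable (α := ℝ)) inferInstance
  set E1 := PolishSpace.measurableEquivNatBoolOfNotCountable hunc with hE1
  set s : (I → ℝ) → (Set.Icc (0:ℝ) 1) := fun x => ⟨gmap (E1 x), gmap_mem_Icc _⟩ with hs
  have hsmeas : Measurable s :=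
    Measurable.subtype_mk (continuous_gmap.measurable.comp E1.measurable)
  have hsinj : Function.Injective s := by
    intro a b hab
    exact E1.injective (injective_gmap (congrArg Subtype.val hab))
  have hemb : MeasurableEmbedding s := hsmeas.measurableEmbedding hsinj
  set φ : (Set.Icc (0:ℝ) 1) → (I → ℝ) := Function.extend s id (fun _ => 0) with hφ
  have hφmeas : Measurable φ := hemb.measurable_extend measurable_id measurable_const
  have hφs : ∀ x, φ (s x) = x := fun x => hsinj.extend_apply _ _ _
  have hnull : (volume : Measure (Set.Icc (0:ℝ) 1)) (Subtype.val ⁻¹' Set.range gmap) = 0 := by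
    have h1 : (volume : Measure (Set.Icc (0:ℝ) 1)) (Subtype.val ⁻¹' Set.range gmap)
        = volume (Subtype.val '' (Subtype.val ⁻¹' Set.range gmap)) :=
      comap_subtype_coe_apply measurableSet_Icc volume _
    rw [h1]
    exact measure_mono_null (Set.image_preimage_subset _ _) volume_range_gmap
  have hae : ∀ᵐ u : (Set.Icc (0:ℝ) 1), φ u = 0 := by
    rw [ae_iff]
    refine measure_mono_null ?_ hnull
    intro u hu
    by_contra hval
    apply hu
    have hns : ¬ ∃ x, s x = u := by
      rintro ⟨x, rfl⟩
      exact hval ⟨E1 x, rfl⟩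
    show φ u = 0
    rw [hφ, Function.extend_apply' _ _ _ hns]
  set fam : I → (Set.Icc (0:ℝ) 1) → ℝ := fun i u => φ u i with hfam
  have hfmem : ∀ i, MemLpReal volume p (fam i) := by
    intro i
    refine ⟨(measurable_pi_apply i).comp hφmeas, ?_⟩
    have hae0 : ∀ᵐ u : (Set.Icc (0:ℝ) 1),
        ENNReal.ofReal (|fam i u| ^ p) = 0 := by
      filter_upwards [hae] with u hu
      have : fam i u = 0 := by rw [hfam]; simp only [hu]; rfl
      rw [this, abs_zero, Real.zero_rpow hp0, ENNReal.ofReal_zero]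
    rw [lintegral_congr_ae hae0, lintegral_zero]
    exact ENNReal.zero_lt_top
  have hmeas1 : Measurable (fun u : (Set.Icc (0:ℝ) 1) => τ (φ u)) := (h fam hfmem).1
  have hτeq : τ = (fun u : (Set.Icc (0:ℝ) 1) => τ (φ u)) ∘ s := by
    funext x
    simp only [Function.comp_apply, hφs]
  rw [hτeq]
  exact hmeas1.comp hsmeas

lemma lintegral_Icc_subtype (φ : ℝ → ℝ≥0∞) (hφ : Measurable φ) :
    ∫⁻ u : (Set.Icc (0:ℝ) 1), φ ↑u = ∫⁻ x in Set.Ioo (0:ℝ) 1, φ x := by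
  have h0 : (volume : Measure (Set.Icc (0:ℝ) 1)) = Measure.comap Subtype.val volume := rfl
  rw [h0]
  calc ∫⁻ u : (Set.Icc (0:ℝ) 1), φ ↑u ∂(Measure.comap Subtype.val volume)
      = ∫⁻ x, φ x ∂((Measure.comap Subtype.val volume).map Subtype.val) :=
        (lintegral_map hφ measurable_subtype_coe).symm
    _ = ∫⁻ x in Set.Icc (0:ℝ) 1, φ x := by
        rw [map_comap_subtype_coe measurableSet_Icc]
    _ = ∫⁻ x in Set.Ioo (0:ℝ) 1, φ x := by
        rw [show (volume.restrict (Set.Icc (0:ℝ) 1)) = volume.restrict (Set.Ioo (0:ℝ) 1) from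
          (Measure.restrict_congr_set Ioo_ae_eq_Icc).symm]

end PPI

theorem preserves_p_integrability_finite_iff_over_unitInterval {I : Type v} [Countable I]
    (τ : (I → ℝ) → ℝ) (p : ℝ) (hp : 1 ≤ p) :
    (∀ (Ω : Type u) [MeasurableSpace Ω] (μ : Measure Ω) [IsFiniteMeasure μ],
        PreservesLpOver τ p Ω μ) ↔
      PreservesLpOver τ p (Set.Icc (0 : ℝ) 1) volume := by
  have hp0 : (0:ℝ) ≤ p := le_trans zero_le_one hp
  have habs : Measurable (fun t : ℝ => ENNReal.ofReal (|t| ^ p)) :=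
    ENNReal.measurable_ofReal.comp ((Real.continuous_rpow_const hp0).measurable.comp measurable_abs)
  constructor
  · intro H f hf
    set e : ULift.{u} (Set.Icc (0:ℝ) 1) ≃ᵐ (Set.Icc (0:ℝ) 1) := MeasurableEquiv.ulift with he
    set μU : Measure (ULift.{u} (Set.Icc (0:ℝ) 1)) := Measure.map e.symm volume with hμU
    haveI : IsFiniteMeasure μU := by
      constructor
      rw [hμU, Measure.map_apply e.symm.measurable MeasurableSet.univ]
      exact measure_lt_top _ _
    have key : ∀ g : (Set.Icc (0:ℝ) 1) → ℝ≥0∞, Measurable g →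
        ∫⁻ y, g (e y) ∂μU = ∫⁻ u, g u := by
      intro g hg
      rw [hμU, lintegral_map_equiv (fun y => g (e y)) e.symm]
      simp
    have res := H _ μU (fun i y => f i (e y)) (fun i => ⟨(hf i).1.comp e.measurable, by
      have hk := key (fun u => ENNReal.ofReal (|f i u| ^ p)) (habs.comp (hf i).1)
      show ∫⁻ y, (fun u => ENNReal.ofReal (|f i u| ^ p)) (e y) ∂μU < ⊤
      rw [hk]
      exact (hf i).2⟩)
    have hm : Measurable (fun u : (Set.Icc (0:ℝ) 1) => τ fun i => f i u) := by
      have h2 := res.1.comp e.symm.measurable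
      have h3 : ((fun y => τ fun i => f i (e y)) ∘ e.symm)
          = fun u : (Set.Icc (0:ℝ) 1) => τ fun i => f i u := by
        funext u
        simp only [Function.comp_apply, MeasurableEquiv.apply_symm_apply]
      rwa [h3] at h2
    refine ⟨hm, ?_⟩
    have hk := key (fun u => ENNReal.ofReal (|τ fun i => f i u| ^ p)) (habs.comp hm)
    show (∫⁻ u, (fun u => ENNReal.ofReal (|τ fun i => f i u| ^ p)) u) < ⊤
    rw [← hk]
    exact res.2
  · intro h Ω _ μ _ f hf
    have hτ : Measurable τ := PPI.measurable_tau τ p hp h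
    set F : Ω → I → ℝ := fun x i => f i x with hF
    have hFmeas : Measurable F := measurable_pi_lambda _ (fun i => (hf i).1)
    have habs : Measurable (fun t : ℝ => ENNReal.ofReal (|t| ^ p)) :=
      ENNReal.measurable_ofReal.comp ((Real.continuous_rpow_const hp0).measurable.comp measurable_abs)
    refine ⟨hτ.comp hFmeas, ?_⟩
    rcases eq_or_ne (μ Set.univ) 0 with hc | hc
    · rw [Measure.measure_univ_eq_zero.mp hc, lintegral_zero_measure]
      exact ENNReal.zero_lt_top
    · set c := μ Set.univ with hcdef
      have hcfin : c ≠ ⊤ := measure_ne_top μ _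
      set μ' := c⁻¹ • μ with hμ'
      haveI : IsProbabilityMeasure μ' := by
        constructor
        rw [hμ', Measure.smul_apply, smul_eq_mul, ← hcdef, ENNReal.inv_mul_cancel hc hcfin]
      set ν' := Measure.map F μ' with hν'
      haveI : IsProbabilityMeasure ν' := Measure.isProbabilityMeasure_map hFmeas.aemeasurable
      obtain ⟨G, hGmeas, hGmap⟩ := PPI.exists_map_eq (I → ℝ) ν'
      have key : ∀ ψ : (I → ℝ) → ℝ≥0∞, Measurable ψ →
          (∫⁻ u : (Set.Icc (0:ℝ) 1), ψ (G ↑u)) = ∫⁻ x, ψ (F x) ∂μ' := by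
        intro ψ hψ
        rw [PPI.lintegral_Icc_subtype (fun x => ψ (G x)) (hψ.comp hGmeas),
          ← lintegral_map hψ hGmeas, hGmap, hν', lintegral_map hψ hFmeas]
      have hfam : ∀ i, MemLpReal volume p (fun u : (Set.Icc (0:ℝ) 1) => G ↑u i) := by
        intro i
        have hψ : Measurable (fun z : I → ℝ => ENNReal.ofReal (|z i| ^ p)) :=
          habs.comp (measurable_pi_apply i)
        refine ⟨(measurable_pi_apply i).comp (hGmeas.comp measurable_subtype_coe), ?_⟩
        have hkey := key _ hψ
        have hlt : ∫⁻ x, ENNReal.ofReal (|F x i| ^ p) ∂μ' < ⊤ := by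
          rw [hμ', lintegral_smul_measure]
          exact ENNReal.mul_lt_top (ENNReal.inv_lt_top.mpr (pos_iff_ne_zero.mpr hc)) (hf i).2
        calc (∫⁻ u : (Set.Icc (0:ℝ) 1), ENNReal.ofReal (|G ↑u i| ^ p))
            = ∫⁻ x, ENNReal.ofReal (|F x i| ^ p) ∂μ' := hkey
          _ < ⊤ := hlt
      have hfin := (h _ hfam).2
      have hψτ : Measurable (fun z : I → ℝ => ENNReal.ofReal (|τ z| ^ p)) := habs.comp hτ
      have hfin' : ∫⁻ x, ENNReal.ofReal (|τ (F x)| ^ p) ∂μ' < ⊤ := by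
        have hk := key _ hψτ
        calc ∫⁻ x, ENNReal.ofReal (|τ (F x)| ^ p) ∂μ'
            = ∫⁻ u : (Set.Icc (0:ℝ) 1), ENNReal.ofReal (|τ (G ↑u)| ^ p) := hk.symm
          _ < ⊤ := hfin
      have hμeq : μ = c • μ' := by
        rw [hμ', smul_smul, ENNReal.mul_inv_cancel hc hcfin, one_smul]
      calc ∫⁻ x, ENNReal.ofReal (|τ fun i => f i x| ^ p) ∂μ
          = c * ∫⁻ x, ENNReal.ofReal (|τ (F x)| ^ p) ∂μ' := by
            rw [hμeq, lintegral_smul_measure, smul_eq_mul]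
        _ < ⊤ := ENNReal.mul_lt_top hcfin.lt_top hfin'
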